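/- Let G be a simple undirected graph on {1,…,n} with maximum degree d, let (i,j) be a pair of distinct nodes that is NOT an edge of G, and let L be a Bernoulli(p) test. Then P_G[Y=1 | {i,j} ⊆ L] ≤ 2dp + P_G[Y=1]. -/

import Mathlib

open scoped BigOperators Classical
open Finset Filter

noncomputable section

/-- The set of all potential edges: unordered pairs of distinct nodes of `Fin n`. -/
def allPairs (n : ℕ) : Finset (Sym2 (Fin n)) :=
  Finset.univ.filter fun e => ¬ e.IsDiag

/-- Both endpoints of the pair `e` lie in the test `L`. -/
def pairIn {n : ℕ} (e : Sym2 (Fin n)) (L : Finset (Fin n)) : Prop :=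
  ∀ v ∈ e, v ∈ L

/-- The test `L` covers some edge of the edge set `E` (positive outcome `Y = 1`). -/
def covers {n : ℕ} (E : Finset (Sym2 (Fin n))) (L : Finset (Fin n)) : Prop :=
  ∃ e ∈ E, pairIn e L

/-- ER(n,q) probability weight of a given edge set `E`. -/
def erWeight (n : ℕ) (q : ℝ) (E : Finset (Sym2 (Fin n))) : ℝ :=
  q ^ E.card * (1 - q) ^ ((allPairs n).card - E.card)

/-- Probability of an event under the Erdős–Rényi random graph ER(n,q). -/
def erProb (n : ℕ) (q : ℝ) (A : Finset (Sym2 (Fin n)) → Prop) : ℝ :=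
  ∑ E ∈ (allPairs n).powerset, if A E then erWeight n q E else 0

/-- Bernoulli(p) probability weight of a single test `L ⊆ {1,…,n}`. -/
def testWeight (n : ℕ) (p : ℝ) (L : Finset (Fin n)) : ℝ :=
  p ^ L.card * (1 - p) ^ (n - L.card)

/-- Probability of an event for a single Bernoulli(p) test. -/
def bernProb (n : ℕ) (p : ℝ) (A : Finset (Fin n) → Prop) : ℝ :=
  ∑ L : Finset (Fin n), if A L then testWeight n p L else 0

/-- Probability weight of `t` i.i.d. Bernoulli(p) tests. -/
def testsWeight (n t : ℕ) (p : ℝ) (Ls : Fin t → Finset (Fin n)) : ℝ :=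
  ∏ i, testWeight n p (Ls i)

/-- Probability of an event for `t` i.i.d. Bernoulli(p) tests. -/
def bernTestsProb (n t : ℕ) (p : ℝ) (A : (Fin t → Finset (Fin n)) → Prop) : ℝ :=
  ∑ Ls : Fin t → Finset (Fin n), if A Ls then testsWeight n t p Ls else 0

/-- Joint probability over an ER(n,q) graph and `t` i.i.d. Bernoulli(p) tests. -/
def erTestsProb (n t : ℕ) (q p : ℝ)
    (A : Finset (Sym2 (Fin n)) → (Fin t → Finset (Fin n)) → Prop) : ℝ :=
  ∑ E ∈ (allPairs n).powerset, ∑ Ls : Fin t → Finset (Fin n),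
    if A E Ls then erWeight n q E * testsWeight n t p Ls else 0

/-- Degree of node `v` in the edge set `E`. -/
def degOf {n : ℕ} (E : Finset (Sym2 (Fin n))) (v : Fin n) : ℕ :=
  (E.filter fun e => v ∈ e).card

/-- Maximum degree of the edge set `E`. -/
def maxDeg {n : ℕ} (E : Finset (Sym2 (Fin n))) : ℕ :=
  Finset.univ.sup (degOf E)

/-- Average number of edges of ER(n, q n): `k̄ = q·C(n,2)`. -/
def kbar (q : ℕ → ℝ) (n : ℕ) : ℝ := q n * (n.choose 2 : ℝ)

/-- Two pairs are vertex-disjoint. -/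
def sym2Disjoint {n : ℕ} (e e' : Sym2 (Fin n)) : Prop := ∀ v, v ∈ e → v ∉ e'

namespace Stmt9Aux

variable {n : ℕ} {p : ℝ}

lemma testWeight_nonneg (hp0 : 0 ≤ p) (hp1 : p ≤ 1) (L : Finset (Fin n)) :
    0 ≤ testWeight n p L :=
  mul_nonneg (pow_nonneg hp0 _) (pow_nonneg (by linarith) _)

lemma bernProb_congr {A B : Finset (Fin n) → Prop} (h : ∀ L, A L ↔ B L) :
    bernProb n p A = bernProb n p B :=
  Finset.sum_congr rfl fun L _ => if_congr (h L) rfl rfl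

lemma bernProb_mono (hp0 : 0 ≤ p) (hp1 : p ≤ 1) {A B : Finset (Fin n) → Prop}
    (h : ∀ L, A L → B L) : bernProb n p A ≤ bernProb n p B := by
  apply Finset.sum_le_sum
  intro L _
  by_cases hA : A L
  · simp [hA, h L hA]
  · simp only [hA, if_false]
    split_ifs
    · exact testWeight_nonneg hp0 hp1 L
    · exact le_refl 0

lemma bernProb_nonneg (hp0 : 0 ≤ p) (hp1 : p ≤ 1) (A : Finset (Fin n) → Prop) :
    0 ≤ bernProb n p A := by
  apply Finset.sum_nonneg
  intro L _
  split_ifs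
  · exact testWeight_nonneg hp0 hp1 L
  · exact le_refl 0

lemma bernProb_true : bernProb n p (fun _ => True) = 1 := by
  unfold bernProb testWeight
  simp only [if_true]
  have h := Finset.prod_add (fun _ : Fin n => p) (fun _ : Fin n => (1 - p)) Finset.univ
  simp only [Finset.prod_const, Finset.card_sdiff_of_subset (Finset.subset_univ _), Finset.card_univ,
    Fintype.card_fin] at h
  rw [Finset.powerset_univ] at h
  rw [← h]
  norm_num

lemma weight_erase (hv : p ≠ 1) (v : Fin n) (L : Finset (Fin n)) (hvL : v ∈ L) :
    (1 - p) * testWeight n p L = p * testWeight n p (L.erase v) := by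
  unfold testWeight
  have hcard : (L.erase v).card = L.card - 1 := Finset.card_erase_of_mem hvL
  have hpos : 1 ≤ L.card := Finset.card_pos.mpr ⟨v, hvL⟩
  have hle : L.card ≤ n := by
    simpa using Finset.card_le_univ L
  rw [hcard]
  have h1 : L.card = (L.card - 1) + 1 := by omega
  have h2 : n - (L.card - 1) = (n - L.card) + 1 := by omega
  rw [h2]
  calc (1 - p) * (p ^ L.card * (1 - p) ^ (n - L.card))
      = p ^ ((L.card - 1) + 1) * (1 - p) ^ (n - L.card) * (1-p) := by rw [← h1]; ring
    _ = p * (p ^ (L.card - 1) * (1 - p) ^ (n - L.card + 1)) := by ring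

lemma bernProb_indep (hp1 : p < 1) (v : Fin n)
    {A : Finset (Fin n) → Prop} (hA : ∀ L, v ∉ L → (A (insert v L) ↔ A L)) :
    bernProb n p (fun L => A L ∧ v ∈ L) = p * bernProb n p A := by
  classical
  set w := testWeight n p with hw
  set S := ∑ L ∈ Finset.univ.filter (fun L : Finset (Fin n) => ¬ v ∈ L),
      (if A L then w L else 0) with hS
  set T := ∑ L ∈ Finset.univ.filter (fun L : Finset (Fin n) => v ∈ L),
      (if A L then w L else 0) with hT
  have hsplit : bernProb n p A = T + S := by
    rw [hT, hS, Finset.sum_filter_add_sum_filter_not Finset.univ (fun L => v ∈ L)]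
    rfl
  have hnum : bernProb n p (fun L => A L ∧ v ∈ L) = T := by
    rw [hT, Finset.sum_filter]
    apply Finset.sum_congr rfl
    intro L _
    by_cases h1 : v ∈ L <;> by_cases h2 : A L <;> simp [h1, h2, hw]
  have key : (1 - p) * T = p * S := by
    rw [hT, hS, Finset.mul_sum, Finset.mul_sum]
    refine Finset.sum_bij' (fun L _ => L.erase v) (fun M _ => insert v M) ?_ ?_ ?_ ?_ ?_
    · intro L hL
      simp [Finset.notMem_erase]
    · intro M hM
      simp
    · intro L hL
      exact Finset.insert_erase (Finset.mem_filter.mp hL).2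
    · intro M hM
      exact Finset.erase_insert (by simpa using (Finset.mem_filter.mp hM).2)
    · intro L hL
      have hvL : v ∈ L := (Finset.mem_filter.mp hL).2
      have hAiff : A L ↔ A (L.erase v) := by
        have := hA (L.erase v) (Finset.notMem_erase v L)
        rwa [Finset.insert_erase hvL] at this
      by_cases h2 : A L
      · rw [if_pos h2, if_pos (hAiff.mp h2)]
        exact weight_erase (ne_of_lt hp1) v L hvL
      · rw [if_neg h2, if_neg (fun h => h2 (hAiff.mpr h))]
        ring
  rw [hnum, hsplit]
  linear_combination key

lemma bernProb_mem (hp1 : p < 1) (a : Fin n) : bernProb n p (fun L => a ∈ L) = p := by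
  have h := bernProb_indep (p := p) hp1 a (A := fun _ => True) (by simp)
  rw [bernProb_true] at h
  have h2 : bernProb n p (fun L => a ∈ L)
      = bernProb n p (fun L => (fun _ : Finset (Fin n) => True) L ∧ a ∈ L) :=
    bernProb_congr (fun L => by simp)
  rw [h2, h, mul_one]

lemma bernProb_pair (hp1 : p < 1) (a b : Fin n) (hab : a ≠ b) :
    bernProb n p (fun L => a ∈ L ∧ b ∈ L) = p ^ 2 := by
  have h := bernProb_indep (p := p) hp1 b (A := fun L => a ∈ L)
    (fun L hL => by simp [Finset.mem_insert, hab])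
  rw [bernProb_mem hp1 a] at h
  rw [h]; ring

lemma bernProb_triple (hp1 : p < 1) (a b c : Fin n) (hab : a ≠ b) (hac : a ≠ c)
    (hbc : b ≠ c) : bernProb n p (fun L => a ∈ L ∧ b ∈ L ∧ c ∈ L) = p ^ 3 := by
  have h := bernProb_indep (p := p) hp1 c (A := fun L => a ∈ L ∧ b ∈ L)
    (fun L hL => by simp [Finset.mem_insert, hac, hbc])
  rw [bernProb_pair hp1 a b hab] at h
  rw [bernProb_congr (B := fun L => (a ∈ L ∧ b ∈ L) ∧ c ∈ L) (fun L => by tauto), h]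
  ring

lemma bernProb_or (hp0 : 0 ≤ p) (hp1 : p ≤ 1) {A B : Finset (Fin n) → Prop} :
    bernProb n p (fun L => A L ∨ B L) ≤ bernProb n p A + bernProb n p B := by
  unfold bernProb
  rw [← Finset.sum_add_distrib]
  apply Finset.sum_le_sum
  intro L _
  have hw := testWeight_nonneg hp0 hp1 L
  by_cases hA : A L <;> by_cases hB : B L <;> simp [hA, hB] <;> linarith

lemma bernProb_union_bound (hp0 : 0 ≤ p) (hp1 : p ≤ 1) {ι : Type*} (F : Finset ι)
    (P : ι → Finset (Fin n) → Prop) :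
    bernProb n p (fun L => ∃ e ∈ F, P e L) ≤ ∑ e ∈ F, bernProb n p (P e) := by
  unfold bernProb
  rw [Finset.sum_comm]
  apply Finset.sum_le_sum
  intro L _
  have hw := testWeight_nonneg hp0 hp1 L
  by_cases h : ∃ e ∈ F, P e L
  · rw [if_pos h]
    obtain ⟨e, he, hPe⟩ := h
    calc testWeight n p L = (if P e L then testWeight n p L else 0) := by rw [if_pos hPe]
      _ ≤ ∑ e ∈ F, (if P e L then testWeight n p L else 0) :=
        Finset.single_le_sum (f := fun e => if P e L then testWeight n p L else 0)
          (fun f _ => by split_ifs <;> [exact hw; exact le_refl 0]) he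
  · rw [if_neg h]
    apply Finset.sum_nonneg
    intro e _
    split_ifs <;> [exact hw; exact le_refl 0]

end Stmt9Aux
open Stmt9Aux

/-- conditional positive-test probability given a non-edge is included.
Let `G` be a simple undirected graph on `{1,…,n}` with maximum degree `d`, let `(i,j)` be a
pair of distinct nodes that is not an edge of `G`, and let `L` be a Bernoulli(p) test.
Then `P_G[Y=1 | {i,j} ⊆ L] ≤ 2dp + P_G[Y=1]`. -/
theorem statement9 (n d : ℕ) (p : ℝ) (hp0 : 0 < p) (hp1 : p < 1)
    (E : Finset (Sym2 (Fin n))) (hsimple : ∀ e ∈ E, ¬ e.IsDiag)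
    (hmax : maxDeg E = d)
    (i j : Fin n) (hij : i ≠ j) (hnotedge : Sym2.mk i j ∉ E) :
    bernProb n p (fun L => covers E L ∧ i ∈ L ∧ j ∈ L) /
        bernProb n p (fun L => i ∈ L ∧ j ∈ L)
      ≤ 2 * d * p + bernProb n p (covers E) := by
  classical
  have hp0' : (0:ℝ) ≤ p := hp0.le
  have hp1' : p ≤ 1 := hp1.le
  have hden : bernProb n p (fun L => i ∈ L ∧ j ∈ L) = p ^ 2 := bernProb_pair hp1 i j hij
  set F : Finset (Sym2 (Fin n)) := E.filter (fun e => i ∈ e ∨ j ∈ e) with hF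
  set E' : Finset (Sym2 (Fin n)) := E.filter (fun e => ¬ i ∈ e ∧ ¬ j ∈ e) with hE'
  -- split of the event
  have hsplitEv : ∀ L, (covers E L ∧ i ∈ L ∧ j ∈ L) →
      ((∃ e ∈ F, pairIn e L ∧ i ∈ L ∧ j ∈ L) ∨ (covers E' L ∧ i ∈ L ∧ j ∈ L)) := by
    rintro L ⟨⟨e, he, hpe⟩, hi, hj⟩
    by_cases hmem : i ∈ e ∨ j ∈ e
    · exact Or.inl ⟨e, Finset.mem_filter.mpr ⟨he, hmem⟩, hpe, hi, hj⟩
    · push_neg at hmem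
      exact Or.inr ⟨⟨e, Finset.mem_filter.mpr ⟨he, hmem⟩, hpe⟩, hi, hj⟩
  have h1 : bernProb n p (fun L => covers E L ∧ i ∈ L ∧ j ∈ L)
      ≤ bernProb n p (fun L => ∃ e ∈ F, pairIn e L ∧ i ∈ L ∧ j ∈ L)
        + bernProb n p (fun L => covers E' L ∧ i ∈ L ∧ j ∈ L) :=
    le_trans (bernProb_mono hp0' hp1' hsplitEv) (bernProb_or hp0' hp1')
  -- per-edge bound
  have hper : ∀ e ∈ F, bernProb n p (fun L => pairIn e L ∧ i ∈ L ∧ j ∈ L) ≤ p ^ 3 := by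
    intro e heF
    obtain ⟨heE, hmem⟩ := Finset.mem_filter.mp heF
    have hdiag := hsimple e heE
    have hex : ∃ v, v ∈ e ∧ v ≠ i ∧ v ≠ j := by
      rcases hmem with hi' | hj'
      · refine ⟨Sym2.Mem.other hi', Sym2.other_mem hi', ?_, ?_⟩
        · intro hvi
          apply hdiag
          rw [← Sym2.other_spec hi', hvi]
          exact Sym2.mk_isDiag_iff.mpr rfl
        · intro hvj
          apply hnotedge
          rw [← Sym2.other_spec hi', hvj] at heE
          exact heE
      · refine ⟨Sym2.Mem.other hj', Sym2.other_mem hj', ?_, ?_⟩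
        · intro hvi
          apply hnotedge
          rw [← Sym2.other_spec hj', hvi, Sym2.eq_swap] at heE
          exact heE
        · intro hvj
          apply hdiag
          rw [← Sym2.other_spec hj', hvj]
          exact Sym2.mk_isDiag_iff.mpr rfl
    obtain ⟨v, hv, hvi, hvj⟩ := hex
    calc bernProb n p (fun L => pairIn e L ∧ i ∈ L ∧ j ∈ L)
        ≤ bernProb n p (fun L => v ∈ L ∧ i ∈ L ∧ j ∈ L) :=
          bernProb_mono hp0' hp1' (fun L h => ⟨h.1 v hv, h.2.1, h.2.2⟩)
      _ = p ^ 3 := bernProb_triple hp1 v i j hvi hvj hij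
  have hcardF : (F.card : ℝ) ≤ 2 * d := by
    have hsub : F ⊆ E.filter (fun e => i ∈ e) ∪ E.filter (fun e => j ∈ e) := by
      rw [← Finset.filter_or]
    have hdi : degOf E i ≤ d := hmax ▸ Finset.le_sup (Finset.mem_univ i)
    have hdj : degOf E j ≤ d := hmax ▸ Finset.le_sup (Finset.mem_univ j)
    have : F.card ≤ 2 * d := by
      calc F.card ≤ (E.filter (fun e => i ∈ e) ∪ E.filter (fun e => j ∈ e)).card :=
            Finset.card_le_card hsub
        _ ≤ degOf E i + degOf E j := Finset.card_union_le _ _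
        _ ≤ 2 * d := by omega
    exact_mod_cast this
  have hterm1 : bernProb n p (fun L => ∃ e ∈ F, pairIn e L ∧ i ∈ L ∧ j ∈ L)
      ≤ 2 * d * p ^ 3 := by
    calc bernProb n p (fun L => ∃ e ∈ F, pairIn e L ∧ i ∈ L ∧ j ∈ L)
        ≤ ∑ e ∈ F, bernProb n p (fun L => pairIn e L ∧ i ∈ L ∧ j ∈ L) :=
          bernProb_union_bound hp0' hp1' F _
      _ ≤ ∑ _e ∈ F, p ^ 3 := Finset.sum_le_sum hper
      _ = (F.card : ℝ) * p ^ 3 := by rw [Finset.sum_const, nsmul_eq_mul]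
      _ ≤ 2 * d * p ^ 3 := by
          have hp3 : (0:ℝ) ≤ p ^ 3 := by positivity
          exact mul_le_mul_of_nonneg_right hcardF hp3
  -- invariance of covers E' under inserting i or j
  have hcov_insert : ∀ u : Fin n, (u = i ∨ u = j) → ∀ L : Finset (Fin n),
      (covers E' (insert u L) ↔ covers E' L) := by
    intro u hu L
    constructor
    · rintro ⟨e, he, hpe⟩
      obtain ⟨heE, hie, hje⟩ := Finset.mem_filter.mp he
      refine ⟨e, he, fun v hv => ?_⟩
      rcases Finset.mem_insert.mp (hpe v hv) with h | h
      · exfalso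
        rcases hu with rfl | rfl
        · subst h; exact hie hv
        · subst h; exact hje hv
      · exact h
    · rintro ⟨e, he, hpe⟩
      exact ⟨e, he, fun v hv => Finset.mem_insert_of_mem (hpe v hv)⟩
  have hterm2 : bernProb n p (fun L => covers E' L ∧ i ∈ L ∧ j ∈ L)
      = p ^ 2 * bernProb n p (covers E') := by
    have hj' := bernProb_indep (p := p) hp1 j (A := fun L => covers E' L ∧ i ∈ L)
      (fun L hL => and_congr (hcov_insert j (Or.inr rfl) L)
        (by simp [Finset.mem_insert, hij]))
    have hi' := bernProb_indep (p := p) hp1 i (A := fun L => covers E' L)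
      (fun L hL => hcov_insert i (Or.inl rfl) L)
    calc bernProb n p (fun L => covers E' L ∧ i ∈ L ∧ j ∈ L)
        = bernProb n p (fun L => (covers E' L ∧ i ∈ L) ∧ j ∈ L) :=
          bernProb_congr (fun L => by tauto)
      _ = p * bernProb n p (fun L => covers E' L ∧ i ∈ L) := hj'
      _ = p * (p * bernProb n p (fun L => covers E' L)) := by rw [hi']
      _ = p ^ 2 * bernProb n p (covers E') := by ring
  have hE'sub : bernProb n p (covers E') ≤ bernProb n p (covers E) := by
    apply bernProb_mono hp0' hp1'
    rintro L ⟨e, he, hpe⟩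
    exact ⟨e, Finset.mem_filter.mp he |>.1, hpe⟩
  have hnum : bernProb n p (fun L => covers E L ∧ i ∈ L ∧ j ∈ L)
      ≤ (2 * d * p + bernProb n p (covers E)) * p ^ 2 := by
    have h2 : bernProb n p (fun L => covers E' L ∧ i ∈ L ∧ j ∈ L)
        ≤ p ^ 2 * bernProb n p (covers E) := by
      rw [hterm2]
      exact mul_le_mul_of_nonneg_left hE'sub (by positivity)
    calc bernProb n p (fun L => covers E L ∧ i ∈ L ∧ j ∈ L)
        ≤ 2 * d * p ^ 3 + p ^ 2 * bernProb n p (covers E) := by linarith [h1]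
      _ = (2 * d * p + bernProb n p (covers E)) * p ^ 2 := by ring
  rw [hden, div_le_iff₀ (by positivity)]
  exact hnum


end
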